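/- arXiv:2009.11282 — 2 statements merged into one kernel-verified Lean document; each statement's English description precedes it below -/
import Mathlib

section
/- Let w(x) = ∫_{-x}^{x} t² φ(t) dt where φ is the standard Gaussian density. Then for all 0 < x ≤ y, w(x)/w(y) ≤ x²/y² provided the function g(x) = w(x)/x² is nondecreasing on (0,y]; more concretely, for 0 < x ≤ y ≤ 1.35 one has w(x)·y² ≤ w(y)·x². -/
open Real

/-- The standard Gaussian density. -/
noncomputable def gaussPhi (t : ℝ) : ℝ := (Real.sqrt (2 * Real.pi))⁻¹ * Real.exp (-t ^ 2 / 2)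

/-- w(x) = ∫_{-x}^{x} t² φ(t) dt. -/
noncomputable def wfun (x : ℝ) : ℝ := ∫ t in (-x)..x, t ^ 2 * gaussPhi t

lemma cont_f : Continuous (fun t : ℝ => t ^ 2 * gaussPhi t) := by
  unfold gaussPhi; continuity

lemma sqrt2pi_pos : (0:ℝ) < (Real.sqrt (2 * Real.pi))⁻¹ := by
  rw [inv_pos]
  exact Real.sqrt_pos.mpr (by positivity)

lemma gaussPhi_pos (x : ℝ) : 0 < gaussPhi x :=
  mul_pos sqrt2pi_pos (Real.exp_pos _)

lemma gaussPhi_hasDerivAt (x : ℝ) : HasDerivAt gaussPhi (-x * gaussPhi x) x := by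
  have h : HasDerivAt (fun t : ℝ => -t ^ 2 / 2) (-x) x := by
    have := ((hasDerivAt_pow 2 x).neg).div_const 2
    refine this.congr_deriv ?_; push_cast; ring
  have := (h.exp).const_mul (Real.sqrt (2 * Real.pi))⁻¹
  refine this.congr_deriv ?_
  unfold gaussPhi; ring

lemma wfun_eq (x : ℝ) : wfun x = 2 * ∫ t in (0:ℝ)..x, t ^ 2 * gaussPhi t := by
  have h2 : (∫ t in (0:ℝ)..x, t ^ 2 * gaussPhi t)
      = ∫ t in (-x)..(0:ℝ), t ^ 2 * gaussPhi t := by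
    have := intervalIntegral.integral_comp_neg (a := (0:ℝ)) (b := x)
        (fun t => t ^ 2 * gaussPhi t)
    simp only [neg_zero] at this
    rw [← this]
    congr 1; funext t; unfold gaussPhi; ring_nf
  rw [wfun, ← intervalIntegral.integral_add_adjacent_intervals
      (a := -x) (b := 0) (c := x) ((cont_f).intervalIntegrable _ _) ((cont_f).intervalIntegrable _ _),
      ← h2]
  ring

lemma wfun_hasDerivAt (x : ℝ) : HasDerivAt wfun (2 * (x ^ 2 * gaussPhi x)) x := by
  have h : HasDerivAt (fun y => ∫ t in (0:ℝ)..y, t ^ 2 * gaussPhi t) (x ^ 2 * gaussPhi x) x :=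
    intervalIntegral.integral_hasDerivAt_right ((cont_f).intervalIntegrable _ _)
      (cont_f.stronglyMeasurableAtFilter _ _) cont_f.continuousAt
  refine HasDerivAt.congr_of_eventuallyEq (h.const_mul 2) ?_
  filter_upwards with y using (wfun_eq y)

lemma exp_neg_le_poly {u : ℝ} (h0 : 0 ≤ u) :
    Real.exp (-u) ≤ 1 - u + u^2/2 - u^3/6 + u^4/24 := by
  have hQ : 1 + u + u^2/2 + u^3/6 + u^4/24 + u^5/120 ≤ Real.exp u := by
    have := Real.sum_le_exp_of_nonneg h0 6
    norm_num [Finset.sum_range_succ, Nat.factorial] at this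
    linarith
  have hQpos : (0:ℝ) < 1 + u + u^2/2 + u^3/6 + u^4/24 + u^5/120 := by positivity
  have h2 : Real.exp (-u) ≤ (1 + u + u^2/2 + u^3/6 + u^4/24 + u^5/120)⁻¹ := by
    rw [Real.exp_neg]
    exact inv_anti₀ hQpos hQ
  refine h2.trans ?_
  rw [inv_le_iff_one_le_mul₀ hQpos]
  nlinarith [pow_nonneg h0 5, pow_nonneg h0 6, pow_nonneg h0 7, pow_nonneg h0 8,
    pow_nonneg h0 9, sq_nonneg u, sq_nonneg (1-u), mul_nonneg h0 h0]

lemma exp_u0_lb : (0.40192 : ℝ) ≤ Real.exp (-(729/800)) := by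
  have hb := Real.exp_bound' (x := 729/800) (by norm_num) (by norm_num) (n := 7) (by norm_num)
  norm_num [Finset.sum_range_succ, Nat.factorial] at hb
  have hB : Real.exp (729/800) ≤ 2.4880 := hb.trans (by norm_num)
  have hpos : (0:ℝ) < Real.exp (729/800) := Real.exp_pos _
  rw [Real.exp_neg, le_inv_comm₀ (by norm_num) hpos]
  calc Real.exp (729/800) ≤ 2.4880 := hB
    _ ≤ (0.40192:ℝ)⁻¹ := by norm_num

lemma integral_poly :
    (∫ t in (0:ℝ)..1.35, (t^2 - t^4/2 + t^6/8 - t^8/48 + t^10/384))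
      = (1.35:ℝ)^3/3 - 1.35^5/10 + 1.35^7/56 - 1.35^9/432 + 1.35^11/4224 := by
  have hF : ∀ t ∈ Set.uIcc (0:ℝ) 1.35,
      HasDerivAt (fun t : ℝ => t^3/3 - t^5/10 + t^7/56 - t^9/432 + t^11/4224)
        (t^2 - t^4/2 + t^6/8 - t^8/48 + t^10/384) t := by
    intro t _
    have h3 := (hasDerivAt_pow 3 t).div_const 3
    have h5 := (hasDerivAt_pow 5 t).div_const 10
    have h7 := (hasDerivAt_pow 7 t).div_const 56
    have h9 := (hasDerivAt_pow 9 t).div_const 432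
    have h11 := (hasDerivAt_pow 11 t).div_const 4224
    have := (((h3.sub h5).add h7).sub h9).add h11
    refine this.congr_deriv ?_
    push_cast; ring
  rw [intervalIntegral.integral_eq_sub_of_hasDerivAt hF
    (by apply Continuous.intervalIntegrable; continuity)]
  norm_num

lemma integral_le :
    (∫ t in (0:ℝ)..1.35, t^2 * Real.exp (-t^2/2))
      ≤ (1.35:ℝ)^3/3 - 1.35^5/10 + 1.35^7/56 - 1.35^9/432 + 1.35^11/4224 := by
  rw [← integral_poly]
  apply intervalIntegral.integral_mono_on (by norm_num)
  · apply Continuous.intervalIntegrable; continuity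
  · apply Continuous.intervalIntegrable; continuity
  · intro t ht
    have hu : (0:ℝ) ≤ t^2/2 := by positivity
    have h := exp_neg_le_poly hu
    calc t^2 * Real.exp (-t^2/2) = t^2 * Real.exp (-(t^2/2)) := by ring_nf
      _ ≤ t^2 * (1 - t^2/2 + (t^2/2)^2/2 - (t^2/2)^3/6 + (t^2/2)^4/24) :=
        mul_le_mul_of_nonneg_left h (by positivity)
      _ = t^2 - t^4/2 + t^6/8 - t^8/48 + t^10/384 := by ring

lemma key_num : wfun 1.35 ≤ (1.35:ℝ)^3 * gaussPhi 1.35 := by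
  rw [wfun_eq]
  have hsplit : ∀ t : ℝ, t ^ 2 * gaussPhi t
      = (Real.sqrt (2 * Real.pi))⁻¹ * (t^2 * Real.exp (-t^2/2)) := by
    intro t; unfold gaussPhi; ring
  simp only [hsplit]
  rw [intervalIntegral.integral_const_mul]
  have hphi : gaussPhi 1.35 = (Real.sqrt (2 * Real.pi))⁻¹ * Real.exp (-(729/800)) := by
    unfold gaussPhi; norm_num
  rw [hphi]
  have hI := integral_le
  have hE := exp_u0_lb
  have hc := sqrt2pi_pos
  set c := (Real.sqrt (2 * Real.pi))⁻¹
  calc 2 * (c * ∫ t in (0:ℝ)..1.35, t^2 * Real.exp (-t^2/2))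
      ≤ 2 * (c * ((1.35:ℝ)^3/3 - 1.35^5/10 + 1.35^7/56 - 1.35^9/432 + 1.35^11/4224)) := by
        nlinarith [hc]
    _ ≤ (1.35:ℝ)^3 * (c * Real.exp (-(729/800))) := by nlinarith [hc, hE]

/-- h(x) = x³φ(x) - w(x) -/
noncomputable def hfun (x : ℝ) : ℝ := x ^ 3 * gaussPhi x - wfun x

lemma hfun_hasDerivAt (x : ℝ) :
    HasDerivAt hfun ((x ^ 2 - x ^ 4) * gaussPhi x) x := by
  have h2 := ((hasDerivAt_pow 3 x).mul (gaussPhi_hasDerivAt x)).sub (wfun_hasDerivAt x)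
  have he : hfun = fun x => x ^ 3 * gaussPhi x - wfun x := rfl
  rw [he]
  refine h2.congr_deriv ?_
  push_cast
  ring

lemma hfun_diff : Differentiable ℝ hfun := fun x => (hfun_hasDerivAt x).differentiableAt

lemma hfun_zero : hfun 0 = 0 := by
  unfold hfun wfun
  norm_num

lemma hfun_nonneg {x : ℝ} (h0 : 0 ≤ x) (h1 : x ≤ 1.35) : 0 ≤ hfun x := by
  rcases le_or_gt x 1 with hle | hgt
  · have hmono : MonotoneOn hfun (Set.Icc 0 1) := by
      apply monotoneOn_of_deriv_nonneg (convex_Icc 0 1) hfun_diff.continuous.continuousOn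
        hfun_diff.differentiableOn
      intro t ht
      rw [interior_Icc] at ht
      rw [(hfun_hasDerivAt t).deriv]
      have ht2 : t ^ 2 ≤ 1 := by nlinarith [ht.1.le, ht.2.le]
      have : (0:ℝ) ≤ t ^ 2 - t ^ 4 := by nlinarith [sq_nonneg t, ht2]
      exact mul_nonneg this (gaussPhi_pos t).le
    have := hmono (Set.mem_Icc.mpr ⟨le_refl 0, by norm_num⟩) (Set.mem_Icc.mpr ⟨h0, hle⟩) h0
    rwa [hfun_zero] at this
  · have hanti : AntitoneOn hfun (Set.Icc 1 1.35) := by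
      apply antitoneOn_of_deriv_nonpos (convex_Icc 1 1.35) hfun_diff.continuous.continuousOn
        hfun_diff.differentiableOn
      intro t ht
      rw [interior_Icc] at ht
      rw [(hfun_hasDerivAt t).deriv]
      have ht2 : 1 ≤ t ^ 2 := by nlinarith [ht.1.le, ht.2.le]
      have : t ^ 2 - t ^ 4 ≤ 0 := by nlinarith [sq_nonneg t, ht2]
      exact mul_nonpos_of_nonpos_of_nonneg this (gaussPhi_pos t).le
    have h135 : (0:ℝ) ≤ hfun 1.35 := by
      unfold hfun; linarith [key_num]
    have := hanti (Set.mem_Icc.mpr ⟨hgt.le, h1⟩) (Set.mem_Icc.mpr ⟨by norm_num, le_refl _⟩) h1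
    linarith

lemma g_mono : MonotoneOn (fun x => wfun x / x ^ 2) (Set.Ioc 0 1.35) := by
  apply monotoneOn_of_deriv_nonneg (convex_Ioc 0 1.35)
  · apply ContinuousOn.div
    · exact (Differentiable.continuous (fun x => (wfun_hasDerivAt x).differentiableAt)).continuousOn
    · exact (continuous_pow 2).continuousOn
    · intro x hx
      exact pow_ne_zero 2 (ne_of_gt hx.1)
  · rw [interior_Ioc]
    intro x hx
    exact ((wfun_hasDerivAt x).div (hasDerivAt_pow 2 x)
      (pow_ne_zero 2 (ne_of_gt hx.1))).differentiableAt.differentiableWithinAt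
  · rw [interior_Ioc]
    intro x hx
    have hx0 : (0:ℝ) < x := hx.1
    have hd := (wfun_hasDerivAt x).div (hasDerivAt_pow 2 x) (pow_ne_zero 2 (ne_of_gt hx0))
    rw [show (fun x => wfun x / x ^ 2) = (wfun / fun x => x ^ 2) from rfl, hd.deriv]
    have hh := hfun_nonneg hx0.le hx.2.le
    unfold hfun at hh
    apply div_nonneg _ (by positivity)
    norm_num
    nlinarith [mul_nonneg hx0.le hh]

/-- For 0 < x ≤ y ≤ 1.35 one has w(x)·y² ≤ w(y)·x², i.e. w(x)/w(y) ≤ x²/y². -/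
theorem stmt0 (x y : ℝ) (hx : 0 < x) (hxy : x ≤ y) (hy : y ≤ 1.35) :
    wfun x * y ^ 2 ≤ wfun y * x ^ 2 := by
  have hy0 : 0 < y := lt_of_lt_of_le hx hxy
  have hgx := g_mono (Set.mem_Ioc.mpr ⟨hx, hxy.trans hy⟩) (Set.mem_Ioc.mpr ⟨hy0, hy⟩) hxy
  have hx2 : (0:ℝ) < x ^ 2 := by positivity
  have hy2 : (0:ℝ) < y ^ 2 := by positivity
  rw [div_le_div_iff₀ hx2 hy2] at hgx
  linarith
end

section
/- Let M_i = U_i Σ_i V_iᵀ for i = 1,…,K where U_i, V_i have orthonormal columns and Σ_i is diagonal with positive entries. If ‖U_iᵀU_j‖_F ≤ 1/(2√K Γ) and ‖V_iᵀV_j‖_F ≤ 1/(2√K Γ) for all i ≠ j, then |⟨M_i, M_j⟩| ≤ (1/(4KΓ²)) ‖M_i‖_F ‖M_j‖_F for all i ≠ j. -/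
open Matrix Finset

/-- Euclidean norm of a vector. -/
noncomputable def euclEnorm {ι : Type*} [Fintype ι] (x : ι → ℝ) : ℝ :=
  Real.sqrt (∑ i, x i ^ 2)

/-- Frobenius norm of a matrix. -/
noncomputable def frob {ι κ : Type*} [Fintype ι] [Fintype κ] (A : Matrix ι κ ℝ) : ℝ :=
  Real.sqrt (∑ i, ∑ j, A i j ^ 2)

/-- Matrix inner product ⟨A,B⟩ = Tr(AᵀB). -/
noncomputable def minner {ι κ : Type*} [Fintype ι] [Fintype κ] (A B : Matrix ι κ ℝ) : ℝ :=
  ∑ i, ∑ j, A i j * B i j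

/-- The k-th largest singular value, via the Courant–Fischer max-min characterization. -/
noncomputable def sval {ι κ : Type*} [Fintype ι] [Fintype κ] (A : Matrix ι κ ℝ) (k : ℕ) : ℝ :=
  sSup {t : ℝ | ∃ V : Submodule ℝ (κ → ℝ), Module.finrank ℝ V = k ∧
    ∀ x ∈ V, t * euclEnorm x ≤ euclEnorm (A.mulVec x)}

/-- Spectral (operator) norm = largest singular value. -/
noncomputable def spec {ι κ : Type*} [Fintype ι] [Fintype κ] (A : Matrix ι κ ℝ) : ℝ :=
  sval A 1

lemma minner_eq_trace {ι κ : Type*} [Fintype ι] [Fintype κ]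
    (A B : Matrix ι κ ℝ) : minner A B = (Aᵀ * B).trace := by
  simp only [minner, Matrix.trace, Matrix.diag, Matrix.mul_apply, Matrix.transpose_apply]
  rw [Finset.sum_comm]

lemma minner_self_nonneg {ι κ : Type*} [Fintype ι] [Fintype κ] (A : Matrix ι κ ℝ) :
    0 ≤ minner A A := by
  apply Finset.sum_nonneg; intro i _; apply Finset.sum_nonneg; intro j _; nlinarith [sq_nonneg (A i j)]

lemma frob_eq_sqrt_minner {ι κ : Type*} [Fintype ι] [Fintype κ] (A : Matrix ι κ ℝ) :
    frob A = Real.sqrt (minner A A) := by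
  simp [frob, minner, sq]

lemma frob_nonneg {ι κ : Type*} [Fintype ι] [Fintype κ] (A : Matrix ι κ ℝ) :
    0 ≤ frob A := Real.sqrt_nonneg _

lemma abs_minner_le {ι κ : Type*} [Fintype ι] [Fintype κ] (A B : Matrix ι κ ℝ) :
    |minner A B| ≤ frob A * frob B := by
  have h : (∑ p : ι × κ, A p.1 p.2 * B p.1 p.2) ^ 2 ≤
      (∑ p : ι × κ, A p.1 p.2 ^ 2) * (∑ p : ι × κ, B p.1 p.2 ^ 2) :=
    Finset.sum_mul_sq_le_sq_mul_sq Finset.univ _ _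
  have hA : minner A B = ∑ p : ι × κ, A p.1 p.2 * B p.1 p.2 := by
    rw [minner, Fintype.sum_prod_type]
  have hfa : frob A = Real.sqrt (∑ p : ι × κ, A p.1 p.2 ^ 2) := by
    rw [frob, Fintype.sum_prod_type]
  have hfb : frob B = Real.sqrt (∑ p : ι × κ, B p.1 p.2 ^ 2) := by
    rw [frob, Fintype.sum_prod_type]
  rw [hA, hfa, hfb, ← Real.sqrt_mul (by positivity), ← Real.sqrt_sq_eq_abs]
  exact Real.sqrt_le_sqrt h

lemma frob_mul_le {ι κ μ : Type*} [Fintype ι] [Fintype κ] [Fintype μ]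
    (A : Matrix ι κ ℝ) (B : Matrix κ μ ℝ) : frob (A * B) ≤ frob A * frob B := by
  have key : ∑ i, ∑ j, (A * B) i j ^ 2 ≤ (∑ i, ∑ j, A i j ^ 2) * (∑ i, ∑ j, B i j ^ 2) := by
    have h1 : ∀ i m, (A * B) i m ^ 2 ≤ (∑ j, A i j ^ 2) * (∑ j, B j m ^ 2) := by
      intro i m
      simpa [Matrix.mul_apply] using
        Finset.sum_mul_sq_le_sq_mul_sq Finset.univ (fun j => A i j) (fun j => B j m)
    calc ∑ i, ∑ m, (A * B) i m ^ 2
        ≤ ∑ i, ∑ m, (∑ j, A i j ^ 2) * (∑ j, B j m ^ 2) := by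
          apply Finset.sum_le_sum; intro i _; apply Finset.sum_le_sum; intro m _; exact h1 i m
      _ = (∑ i, ∑ j, A i j ^ 2) * (∑ m, ∑ j, B j m ^ 2) :=
          (Finset.sum_mul_sum Finset.univ Finset.univ (fun i => ∑ j, A i j ^ 2)
            (fun m => ∑ j, B j m ^ 2)).symm
      _ = _ := by rw [Finset.sum_comm (s := (Finset.univ : Finset μ))]
  rw [frob, frob, frob, ← Real.sqrt_mul (by positivity)]
  exact Real.sqrt_le_sqrt key

lemma frob_orthL {ι κ μ : Type*} [Fintype ι] [Fintype κ] [Fintype μ] [DecidableEq κ]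
    (U : Matrix ι κ ℝ) (X : Matrix κ μ ℝ) (hU : Uᵀ * U = 1) :
    frob (U * X) = frob X := by
  rw [frob_eq_sqrt_minner, frob_eq_sqrt_minner, minner_eq_trace, minner_eq_trace]
  congr 2
  rw [Matrix.transpose_mul, Matrix.mul_assoc, ← Matrix.mul_assoc Uᵀ U X, hU, Matrix.one_mul]

lemma frob_orthR {ι κ μ : Type*} [Fintype ι] [Fintype κ] [Fintype μ] [DecidableEq κ]
    (X : Matrix ι κ ℝ) (V : Matrix μ κ ℝ) (hV : Vᵀ * V = 1) :
    frob (X * Vᵀ) = frob X := by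
  rw [frob_eq_sqrt_minner, frob_eq_sqrt_minner, minner_eq_trace, minner_eq_trace]
  congr 1
  rw [Matrix.transpose_mul, Matrix.transpose_transpose, Matrix.mul_assoc,
    Matrix.trace_mul_comm V, Matrix.mul_assoc, Matrix.mul_assoc, hV, Matrix.mul_one]

/-- Stmt 3: if M_i = U_i Σ_i V_iᵀ with orthonormal U_i, V_i, positive diagonal Σ_i, and
‖U_iᵀU_j‖_F, ‖V_iᵀV_j‖_F ≤ 1/(2√K Γ) for i ≠ j, then
|⟨M_i,M_j⟩| ≤ (1/(4KΓ²))‖M_i‖_F‖M_j‖_F for i ≠ j. -/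
theorem stmt3 (n₁ n₂ K : ℕ) (Γ : ℝ) (hΓ : 0 < Γ) (r : Fin K → ℕ)
    (U : ∀ k : Fin K, Matrix (Fin n₁) (Fin (r k)) ℝ)
    (V : ∀ k : Fin K, Matrix (Fin n₂) (Fin (r k)) ℝ)
    (d : ∀ k : Fin K, Fin (r k) → ℝ)
    (M : Fin K → Matrix (Fin n₁) (Fin n₂) ℝ)
    (hU : ∀ k, (U k)ᵀ * U k = 1) (hV : ∀ k, (V k)ᵀ * V k = 1)
    (hd : ∀ k j, 0 < d k j)
    (hM : ∀ k, M k = U k * Matrix.diagonal (d k) * (V k)ᵀ)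
    (hUcross : ∀ i j, i ≠ j → frob ((U i)ᵀ * U j) ≤ 1 / (2 * Real.sqrt K * Γ))
    (hVcross : ∀ i j, i ≠ j → frob ((V i)ᵀ * V j) ≤ 1 / (2 * Real.sqrt K * Γ)) :
    ∀ i j, i ≠ j → |minner (M i) (M j)| ≤ 1 / (4 * K * Γ ^ 2) * frob (M i) * frob (M j) := by
  intro i j hij
  have hK : 0 < K := i.pos
  set Di := Matrix.diagonal (d i) with hDi
  set Dj := Matrix.diagonal (d j) with hDj
  set P := (U i)ᵀ * U j with hP
  set Q := (V j)ᵀ * V i with hQ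
  set ε := 1 / (2 * Real.sqrt K * Γ) with hε
  -- Frobenius norms of M
  have hfi : frob (M i) = frob Di := by
    rw [hM i, frob_orthR _ _ (hV i), frob_orthL _ _ (hU i)]
  have hfj : frob (M j) = frob Dj := by
    rw [hM j, frob_orthR _ _ (hV j), frob_orthL _ _ (hU j)]
  -- key identity
  have key : minner (M i) (M j) = minner Di (P * (Dj * Q)) := by
    rw [minner_eq_trace, minner_eq_trace, hM i, hM j]
    have h1 : ((U i * Matrix.diagonal (d i)) * (V i)ᵀ)ᵀ *
        ((U j * Matrix.diagonal (d j)) * (V j)ᵀ) =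
        V i * (Di * ((U i)ᵀ * (U j * (Dj * (V j)ᵀ)))) := by
      simp [Matrix.transpose_mul, Matrix.diagonal_transpose, Matrix.mul_assoc, hDi, hDj]
    rw [h1, Matrix.trace_mul_comm (V i)]
    have h2 : Di * ((U i)ᵀ * (U j * (Dj * (V j)ᵀ))) * V i =
        Diᵀ * (P * (Dj * Q)) := by
      simp [hP, hQ, hDi, hDj, Matrix.diagonal_transpose, Matrix.mul_assoc]
    rw [h2]
  -- bound
  have hchain : |minner (M i) (M j)| ≤ frob Di * (frob P * (frob Dj * frob Q)) := by
    rw [key]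
    calc |minner Di (P * (Dj * Q))| ≤ frob Di * frob (P * (Dj * Q)) := abs_minner_le _ _
      _ ≤ frob Di * (frob P * frob (Dj * Q)) :=
          mul_le_mul_of_nonneg_left (frob_mul_le _ _) (frob_nonneg _)
      _ ≤ frob Di * (frob P * (frob Dj * frob Q)) := by
          apply mul_le_mul_of_nonneg_left _ (frob_nonneg _)
          exact mul_le_mul_of_nonneg_left (frob_mul_le _ _) (frob_nonneg _)
  have hp := hUcross i j hij
  have hq := hVcross j i hij.symm
  have hεpos : 0 < ε := by
    rw [hε]; positivity
  have hsq : Real.sqrt K ^ 2 = K := Real.sq_sqrt (Nat.cast_nonneg K)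
  have hε2 : ε ^ 2 = 1 / (4 * K * Γ ^ 2) := by
    rw [hε, div_pow, one_pow]
    congr 1
    rw [mul_pow, mul_pow, hsq]
    ring
  have ha := frob_nonneg Di
  have hb := frob_nonneg Dj
  have hp0 := frob_nonneg P
  have hq0 := frob_nonneg Q
  rw [hfi, hfj, ← hε2]
  calc |minner (M i) (M j)| ≤ frob Di * (frob P * (frob Dj * frob Q)) := hchain
    _ ≤ frob Di * (ε * (frob Dj * ε)) := by
        apply mul_le_mul_of_nonneg_left _ ha
        exact mul_le_mul hp (mul_le_mul_of_nonneg_left hq hb)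
          (mul_nonneg hb hq0) hεpos.le
    _ = ε ^ 2 * frob Di * frob Dj := by ring
end
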